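/- arXiv:2007.11303 — 3 statements merged into one kernel-verified Lean document; each statement's English description precedes it below -/
import Mathlib

section
/- Let V : ℝ → ℝ be defined by V(x) = (∫_{θ=0}^{2π} cos θ · exp(x · cos θ) dθ) / (∫_{θ=0}^{2π} exp(x · cos θ) dθ). Then V(x) tends to 1 as x tends to +∞. -/
open Real Filter

/-- The function `V(x) = (∫ cos θ e^{x cos θ} dθ) / (∫ e^{x cos θ} dθ)` over `[0, 2π]`. -/
noncomputable def V (x : ℝ) : ℝ :=
  (∫ θ in (0:ℝ)..(2 * π), Real.cos θ * Real.exp (x * Real.cos θ)) /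
  (∫ θ in (0:ℝ)..(2 * π), Real.exp (x * Real.cos θ))

private lemma cont_e (x : ℝ) : Continuous fun θ : ℝ => Real.exp (x * Real.cos θ) :=
  Real.continuous_exp.comp (continuous_const.mul Real.continuous_cos)

private lemma intE (x a b : ℝ) :
    IntervalIntegrable (fun θ => Real.exp (x * Real.cos θ)) MeasureTheory.volume a b :=
  (cont_e x).intervalIntegrable a b

private lemma intCE (x a b : ℝ) :
    IntervalIntegrable (fun θ => Real.cos θ * Real.exp (x * Real.cos θ))
      MeasureTheory.volume a b :=
  (Real.continuous_cos.mul (cont_e x)).intervalIntegrable a b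

private lemma D_pos (x : ℝ) : 0 < ∫ θ in (0:ℝ)..(2 * π), Real.exp (x * Real.cos θ) :=
  intervalIntegral.intervalIntegral_pos_of_pos (intE x 0 (2 * π))
    (fun θ => Real.exp_pos _) (by positivity)

theorem V_tendsto_one : Tendsto V atTop (nhds 1) := by
  rw [Metric.tendsto_nhds]
  intro ε hε
  -- choose δ
  set δ : ℝ := min (π / 4) (Real.sqrt ε / 2) with hδdef
  have hδpos : 0 < δ := lt_min (by positivity) (by positivity)
  have hδle : δ ≤ π / 4 := min_le_left _ _
  have hδpi : δ ≤ π := hδle.trans (by linarith [pi_pos])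
  have hcosδ : 1 - ε / 2 < Real.cos δ := by
    have h1 : δ ^ 2 / 2 < ε / 2 := by
      have h2 : δ ≤ Real.sqrt ε / 2 := min_le_right _ _
      have h3 : δ ^ 2 ≤ (Real.sqrt ε / 2) ^ 2 := by
        apply pow_le_pow_left₀ hδpos.le h2
      have h4 : (Real.sqrt ε / 2) ^ 2 = ε / 4 := by
        rw [div_pow, Real.sq_sqrt hε.le]; norm_num
      nlinarith
    nlinarith [Real.one_sub_sq_div_two_le_cos (x := δ)]
  have hcoshalf : Real.cos δ < Real.cos (δ / 2) :=
    Real.cos_lt_cos_of_nonneg_of_le_pi (by positivity) hδpi (by linarith)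
  -- the error term tends to 0
  have hc : Real.cos δ - Real.cos (δ / 2) < 0 := by linarith
  clear_value δ
  have htend : Tendsto (fun x : ℝ =>
      (8 * π / δ) * Real.exp (x * (Real.cos δ - Real.cos (δ / 2)))) atTop (nhds 0) := by
    have h0 : Tendsto (fun x : ℝ => x * (Real.cos δ - Real.cos (δ / 2))) atTop atBot :=
      (tendsto_mul_const_atBot_of_neg hc).2 tendsto_id
    have := (Real.tendsto_exp_atBot.comp h0).const_mul (8 * π / δ)
    simpa using this
  have hev := (htend.eventually (gt_mem_nhds (half_pos hε))).and (eventually_ge_atTop (0:ℝ))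
  filter_upwards [hev] with x hx
  obtain ⟨hxsmall, hx0⟩ := hx
  set D := ∫ θ in (0:ℝ)..(2 * π), Real.exp (x * Real.cos θ) with hD
  set N := ∫ θ in (0:ℝ)..(2 * π), Real.cos θ * Real.exp (x * Real.cos θ) with hN
  clear_value D N
  have hDpos : 0 < D := by rw [hD]; exact D_pos x
  have hA : D - N = ∫ θ in (0:ℝ)..(2 * π),
      (1 - Real.cos θ) * Real.exp (x * Real.cos θ) := by
    rw [hD, hN, ← intervalIntegral.integral_sub (intE x 0 (2*π)) (intCE x 0 (2*π))]
    congr 1; ext θ; ring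
  -- lower bound for D
  have hDlb : δ / 2 * Real.exp (x * Real.cos (δ / 2)) ≤ D := by
    have h1 : (∫ θ in (0:ℝ)..(δ/2), Real.exp (x * Real.cos (δ / 2)))
        ≤ ∫ θ in (0:ℝ)..(δ/2), Real.exp (x * Real.cos θ) := by
      apply intervalIntegral.integral_mono_on (by positivity)
        (intervalIntegrable_const) (intE x 0 (δ/2))
      intro θ hθ
      have h2 : Real.cos (δ / 2) ≤ Real.cos θ := by
        apply Real.cos_le_cos_of_nonneg_of_le_pi hθ.1 (by linarith) hθ.2
      exact Real.exp_le_exp.mpr (mul_le_mul_of_nonneg_left h2 hx0)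
    have h3 : (∫ θ in (0:ℝ)..(δ/2), Real.exp (x * Real.cos θ)) ≤ D := by
      rw [hD]
      apply intervalIntegral.integral_mono_interval le_rfl (by linarith)
        (by linarith [pi_pos]) _ (intE x 0 (2*π))
      filter_upwards with θ using (Real.exp_pos _).le
    have h4 : (∫ θ in (0:ℝ)..(δ/2), Real.exp (x * Real.cos (δ / 2)))
        = δ / 2 * Real.exp (x * Real.cos (δ / 2)) := by
      rw [intervalIntegral.integral_const]; simp [smul_eq_mul]
    linarith
  -- upper bound for D - N
  have hAub : D - N ≤ ε / 2 * D + 4 * π * Real.exp (x * Real.cos δ) := by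
    rw [hA]
    have h1 : (∫ θ in (0:ℝ)..(2*π), (1 - Real.cos θ) * Real.exp (x * Real.cos θ))
        ≤ ∫ θ in (0:ℝ)..(2*π),
            (ε / 2 * Real.exp (x * Real.cos θ) + 2 * Real.exp (x * Real.cos δ)) := by
      apply intervalIntegral.integral_mono_on (by positivity)
      · exact ((continuous_const.sub Real.continuous_cos).mul (cont_e x)).intervalIntegrable _ _
      · exact ((continuous_const.mul (cont_e x)).add continuous_const).intervalIntegrable _ _
      intro θ _
      by_cases hcase : 1 - Real.cos θ ≤ ε / 2
      · have : (1 - Real.cos θ) * Real.exp (x * Real.cos θ)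
            ≤ ε / 2 * Real.exp (x * Real.cos θ) :=
          mul_le_mul_of_nonneg_right hcase (Real.exp_pos _).le
        nlinarith [Real.exp_pos (x * Real.cos δ)]
      · push_neg at hcase
        have hcos : Real.cos θ ≤ Real.cos δ := by nlinarith
        have h2 : Real.exp (x * Real.cos θ) ≤ Real.exp (x * Real.cos δ) :=
          Real.exp_le_exp.mpr (mul_le_mul_of_nonneg_left hcos hx0)
        have h3 : 1 - Real.cos θ ≤ 2 := by nlinarith [Real.neg_one_le_cos θ]
        have h4 : (0:ℝ) ≤ 1 - Real.cos θ := by nlinarith [Real.cos_le_one θ]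
        have h5 : (1 - Real.cos θ) * Real.exp (x * Real.cos θ)
            ≤ 2 * Real.exp (x * Real.cos δ) := by nlinarith [Real.exp_pos (x * Real.cos θ)]
        nlinarith [Real.exp_pos (x * Real.cos θ)]
    have h6 : (∫ θ in (0:ℝ)..(2*π),
        (ε / 2 * Real.exp (x * Real.cos θ) + 2 * Real.exp (x * Real.cos δ)))
        = ε / 2 * D + 4 * π * Real.exp (x * Real.cos δ) := by
      rw [intervalIntegral.integral_add ((intE x 0 (2*π)).const_mul (ε / 2))
        intervalIntegrable_const, intervalIntegral.integral_const_mul,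
        intervalIntegral.integral_const]
      simp [smul_eq_mul, hD]; ring
    linarith
  -- combine
  have hkey : D - N < ε * D := by
    have h7 : 4 * π * Real.exp (x * Real.cos δ) < ε / 2 * (δ / 2 * Real.exp (x * Real.cos (δ/2))) := by
      have h8 : Real.exp (x * Real.cos δ)
          = Real.exp (x * (Real.cos δ - Real.cos (δ/2))) * Real.exp (x * Real.cos (δ/2)) := by
        rw [← Real.exp_add]; ring_nf
      have hep := Real.exp_pos (x * Real.cos (δ/2))
      rw [div_mul_eq_mul_div, div_lt_iff₀ hδpos] at hxsmall
      rw [h8]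
      nlinarith [mul_lt_mul_of_pos_left hxsmall hep]
    have h9 : ε / 2 * (δ / 2 * Real.exp (x * Real.cos (δ/2))) ≤ ε / 2 * D :=
      mul_le_mul_of_nonneg_left hDlb (by positivity)
    linarith
  have hAnn : 0 ≤ D - N := by
    rw [hA]
    apply intervalIntegral.integral_nonneg (by positivity)
    intro θ _
    have h1 := Real.cos_le_one θ
    exact mul_nonneg (by linarith) (Real.exp_pos _).le
  have hVeq : V x = N / D := by rw [V, hN, hD]
  have hVle : V x ≤ 1 := by
    rw [hVeq, div_le_one hDpos]; linarith
  have hVgt : 1 - ε < V x := by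
    rw [hVeq, lt_div_iff₀ hDpos, sub_mul, one_mul]; linarith
  rw [Real.dist_eq, abs_lt]
  constructor <;> linarith
end

section
/- Let V : ℝ → ℝ be defined by V(x) = (∫_{θ=0}^{2π} cos θ · exp(x · cos θ) dθ) / (∫_{θ=0}^{2π} exp(x · cos θ) dθ) and, for x ≠ 0, set W(x) = 2·V(x)/x. Then W(x) → 1 as x → 0, W(x) → 0 as x → +∞, W is continuous and strictly decreasing on (0, ∞), and W(−x) = W(x) for every x ≠ 0; in particular 0 < W(x) < 1 for every x ≠ 0. -/
open Real Filter Set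

/-- The function `W(x) = 2 V(x) / x`. -/
noncomputable def W (x : ℝ) : ℝ := 2 * V x / x

open intervalIntegral

noncomputable def DD (x : ℝ) : ℝ := ∫ θ in (0:ℝ)..(2*π), Real.exp (x * Real.cos θ)
noncomputable def NN (x : ℝ) : ℝ := ∫ θ in (0:ℝ)..(2*π), Real.cos θ * Real.exp (x * Real.cos θ)
noncomputable def SS (x : ℝ) : ℝ := ∫ θ in (0:ℝ)..(2*π), Real.sin θ ^ 2 * Real.exp (x * Real.cos θ)
noncomputable def TT (x : ℝ) : ℝ := ∫ θ in (0:ℝ)..(2*π), Real.sin θ ^ 2 * Real.cos θ * Real.exp (x * Real.cos θ)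

lemma contI {g : ℝ → ℝ} (hg : Continuous g) (x : ℝ) :
    Continuous fun θ => g θ * Real.exp (x * Real.cos θ) := by fun_prop

lemma twopi_pos : (0:ℝ) < 2 * π := by positivity

-- flip lemma
lemma cosflip {f : ℝ → ℝ} (hper : Function.Periodic f (2*π)) :
    ∫ θ in (0:ℝ)..(2*π), f θ = ∫ θ in (0:ℝ)..(2*π), f (θ + π) := by
  rw [intervalIntegral.integral_comp_add_right]
  rw [show (2*π + π) = π + 2*π by ring, zero_add]
  rw [hper.intervalIntegral_add_eq π 0]
  norm_num

-- derivative of Phi-type integral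
lemma hasDerivAt_I {g : ℝ → ℝ} (hg : Continuous g) (x : ℝ) :
    HasDerivAt (fun y => ∫ θ in (0:ℝ)..(2*π), g θ * Real.exp (y * Real.cos θ))
      (∫ θ in (0:ℝ)..(2*π), Real.cos θ * g θ * Real.exp (x * Real.cos θ)) x := by
  have hint : IntervalIntegrable (fun θ => g θ * Real.exp (x * Real.cos θ))
      MeasureTheory.volume 0 (2*π) := (contI hg x).intervalIntegrable _ _
  have h := intervalIntegral.hasDerivAt_integral_of_dominated_loc_of_deriv_le
    (F := fun y θ => g θ * Real.exp (y * Real.cos θ))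
    (F' := fun y θ => Real.cos θ * g θ * Real.exp (y * Real.cos θ))
    (a := (0:ℝ)) (b := 2*π) (μ := MeasureTheory.volume) (x₀ := x)
    (bound := fun θ => |g θ| * Real.exp (|x| + 1)) (s := Metric.ball x 1) (Metric.ball_mem_nhds x one_pos)
    (Eventually.of_forall fun y => ((contI hg y)).aestronglyMeasurable.restrict)
    hint
    ((contI (Real.continuous_cos.mul hg) x)).aestronglyMeasurable.restrict
    ?_ ?_ ?_
  · exact h.2
  · refine Eventually.of_forall fun θ _ y hy => ?_
    have h1 : |Real.cos θ| ≤ 1 := Real.abs_cos_le_one θ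
    have h2 : y * Real.cos θ ≤ |x| + 1 := by
      have : |y| ≤ |x| + 1 := by
        have := mem_ball_iff_norm.1 hy
        have := abs_sub_abs_le_abs_sub y x
        simp only [Real.norm_eq_abs] at *
        linarith
      calc y * Real.cos θ ≤ |y * Real.cos θ| := le_abs_self _
        _ = |y| * |Real.cos θ| := abs_mul _ _
        _ ≤ (|x| + 1) * 1 := by exact mul_le_mul this h1 (abs_nonneg _) (by positivity)
        _ = |x| + 1 := by ring
    have : ‖Real.cos θ * g θ * Real.exp (y * Real.cos θ)‖
        = |Real.cos θ| * |g θ| * Real.exp (y * Real.cos θ) := by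
      rw [Real.norm_eq_abs, abs_mul, abs_mul, abs_of_pos (Real.exp_pos _)]
    rw [this]
    calc |Real.cos θ| * |g θ| * Real.exp (y * Real.cos θ)
        ≤ 1 * |g θ| * Real.exp (|x| + 1) := by
          apply mul_le_mul (by apply mul_le_mul_of_nonneg_right h1 (abs_nonneg _))
            (Real.exp_le_exp.2 h2) (Real.exp_pos _).le (by positivity)
      _ = |g θ| * Real.exp (|x| + 1) := by ring
  · have : Continuous fun θ : ℝ => |g θ| * Real.exp (|x| + 1) := by fun_prop
    exact this.intervalIntegrable _ _
  · refine Eventually.of_forall fun θ _ y _ => ?_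
    have h1 : HasDerivAt (fun y : ℝ => y * Real.cos θ) (Real.cos θ) y := by
      simpa using (hasDerivAt_id y).mul_const (Real.cos θ)
    have h2 : HasDerivAt (fun y => g θ * Real.exp (y * Real.cos θ)) _ y :=
      (h1.exp).const_mul (g θ)
    exact h2.congr_deriv (by ring)

lemma hasDerivAt_DD (x : ℝ) : HasDerivAt DD (NN x) x := by
  have h := hasDerivAt_I (g := fun _ => 1) continuous_const x
  simp only [one_mul, mul_one] at h
  exact h

lemma hasDerivAt_SS (x : ℝ) : HasDerivAt SS (TT x) x := by
  have h := hasDerivAt_I (g := fun θ => Real.sin θ ^ 2) (by fun_prop) x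
  unfold SS TT
  convert h using 2
  funext θ
  ring

lemma DD_pos (x : ℝ) : 0 < DD x := by
  apply intervalIntegral.intervalIntegral_pos_of_pos_on
    (Continuous.intervalIntegrable (by fun_prop) _ _) (fun t _ => Real.exp_pos _) twopi_pos

-- generic splitting positivity lemma
lemma integral_pos_split {f : ℝ → ℝ} {a u v b : ℝ} (hau : a ≤ u) (huv : u < v) (hvb : v ≤ b)
    (hf : IntervalIntegrable f MeasureTheory.volume a b)
    (h0 : ∀ t ∈ Icc a b, 0 ≤ f t) (hp : ∀ t ∈ Ioo u v, 0 < f t) :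
    0 < ∫ t in a..b, f t := by
  have hab : a ≤ b := hau.trans (huv.le.trans hvb)
  have h1 : IntervalIntegrable f MeasureTheory.volume a u :=
    hf.mono_set (by rw [uIcc_of_le hau, uIcc_of_le hab]; exact Icc_subset_Icc le_rfl (huv.le.trans hvb))
  have h2 : IntervalIntegrable f MeasureTheory.volume u v :=
    hf.mono_set (by rw [uIcc_of_le huv.le, uIcc_of_le hab]; exact Icc_subset_Icc hau (hvb))
  have h3 : IntervalIntegrable f MeasureTheory.volume v b :=
    hf.mono_set (by rw [uIcc_of_le hvb, uIcc_of_le hab]; exact Icc_subset_Icc (hau.trans huv.le) le_rfl)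
  have e1 : (∫ t in a..u, f t) + (∫ t in u..v, f t) = ∫ t in a..v, f t :=
    intervalIntegral.integral_add_adjacent_intervals h1 h2
  have e2 : (∫ t in a..v, f t) + (∫ t in v..b, f t) = ∫ t in a..b, f t :=
    intervalIntegral.integral_add_adjacent_intervals (h1.trans h2) h3
  have p1 : 0 ≤ ∫ t in a..u, f t :=
    intervalIntegral.integral_nonneg hau fun t ht => h0 t ⟨ht.1, ht.2.trans (huv.le.trans hvb)⟩
  have p2 : 0 < ∫ t in u..v, f t :=
    intervalIntegral.intervalIntegral_pos_of_pos_on h2 hp huv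
  have p3 : 0 ≤ ∫ t in v..b, f t :=
    intervalIntegral.integral_nonneg hvb fun t ht => h0 t ⟨(hau.trans (huv.le.trans ht.1)), ht.2⟩
  linarith

lemma SS_pos (x : ℝ) : 0 < SS x := by
  apply integral_pos_split (u := π/2) (v := π) (f := fun θ => Real.sin θ ^ 2 * Real.exp (x * Real.cos θ))
  · positivity
  · have := pi_pos; linarith
  · have := pi_pos; linarith
  · exact (contI (by fun_prop) x).intervalIntegrable _ _
  · intro t _; positivity
  · intro t ht
    have hs : Real.sin t > 0 := Real.sin_pos_of_pos_of_lt_pi (by have := pi_pos; linarith [ht.1]) ht.2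
    positivity

lemma NN_eq (x : ℝ) : NN x = x * SS x := by
  have hder : ∀ θ ∈ uIcc (0:ℝ) (2*π), HasDerivAt (fun t => Real.sin t * Real.exp (x * Real.cos t))
      (Real.cos θ * Real.exp (x * Real.cos θ) - x * (Real.sin θ ^ 2 * Real.exp (x * Real.cos θ))) θ := by
    intro θ _
    have h1 : HasDerivAt (fun t : ℝ => x * Real.cos t) (x * (-Real.sin θ)) θ :=
      (Real.hasDerivAt_cos θ).const_mul x
    have h2 : HasDerivAt (fun t => Real.sin t * Real.exp (x * Real.cos t)) _ θ :=
      (Real.hasDerivAt_sin θ).mul h1.exp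
    convert h2 using 1
    ring
  have hint : IntervalIntegrable (fun θ => Real.cos θ * Real.exp (x * Real.cos θ)
      - x * (Real.sin θ ^ 2 * Real.exp (x * Real.cos θ))) MeasureTheory.volume 0 (2*π) :=
    (Continuous.intervalIntegrable (by fun_prop) _ _)
  have := intervalIntegral.integral_eq_sub_of_hasDerivAt hder hint
  simp only [Real.sin_two_pi, Real.sin_zero, zero_mul, sub_zero] at this
  rw [intervalIntegral.integral_sub ((contI Real.continuous_cos x).intervalIntegrable _ _)
    (Continuous.intervalIntegrable (by fun_prop) _ _)] at this
  rw [intervalIntegral.integral_const_mul] at this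
  have : NN x - x * SS x = 0 := this
  linarith

lemma DD_even (x : ℝ) : DD (-x) = DD x := by
  unfold DD
  rw [cosflip (f := fun θ => Real.exp (-x * Real.cos θ))
    (fun θ => by simp [Real.cos_add_two_pi])]
  congr 1
  funext θ
  rw [Real.cos_add_pi]
  ring_nf

lemma SS_even (x : ℝ) : SS (-x) = SS x := by
  unfold SS
  rw [cosflip (f := fun θ => Real.sin θ ^ 2 * Real.exp (-x * Real.cos θ))
    (fun θ => by simp [Real.cos_add_two_pi, Real.sin_add_two_pi])]
  congr 1
  funext θ
  rw [Real.cos_add_pi, Real.sin_add_pi]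
  ring_nf

lemma NN_odd (x : ℝ) : NN (-x) = -NN x := by
  have h1 := NN_eq x
  have h2 := NN_eq (-x)
  rw [SS_even] at h2
  rw [h1, h2]; ring

noncomputable def W0 (x : ℝ) : ℝ := 2 * SS x / DD x

lemma hasDerivAt_W0 (x : ℝ) :
    HasDerivAt W0 ((2 * TT x * DD x - 2 * SS x * NN x) / DD x ^ 2) x := by
  exact (((hasDerivAt_SS x).const_mul 2).div (hasDerivAt_DD x) (DD_pos x).ne')

lemma continuous_W0 : Continuous W0 :=
  continuous_iff_continuousAt.2 fun x => (hasDerivAt_W0 x).differentiableAt.continuousAt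

noncomputable def Jin (x θ φ : ℝ) : ℝ :=
  (Real.sin φ ^ 2 - Real.sin θ ^ 2) * (Real.cos θ - Real.cos φ)
    * (Real.exp (x * Real.cos θ) * Real.exp (x * Real.cos φ))

noncomputable def binner (x θ : ℝ) : ℝ := ∫ φ in (0:ℝ)..(2*π), Jin x θ φ

noncomputable def BB (x : ℝ) : ℝ := ∫ θ in (0:ℝ)..(2*π), binner x θ

lemma continuous_Jin (x : ℝ) : Continuous (Function.uncurry (Jin x)) := by
  have cf : Continuous fun p : ℝ × ℝ => Real.cos p.1 := Real.continuous_cos.comp continuous_fst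
  have cs : Continuous fun p : ℝ × ℝ => Real.cos p.2 := Real.continuous_cos.comp continuous_snd
  have sf : Continuous fun p : ℝ × ℝ => Real.sin p.1 := Real.continuous_sin.comp continuous_fst
  have ss : Continuous fun p : ℝ × ℝ => Real.sin p.2 := Real.continuous_sin.comp continuous_snd
  exact (((ss.pow 2).sub (sf.pow 2)).mul (cf.sub cs)).mul
    (((continuous_const.mul cf).rexp).mul ((continuous_const.mul cs).rexp))

lemma continuous_binner (x : ℝ) : Continuous (binner x) := by
  unfold binner
  exact intervalIntegral.continuous_parametric_intervalIntegral_of_continuous'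
    (f := Jin x) (μ := MeasureTheory.volume) (continuous_Jin x) 0 (2*π)

lemma continuous_Jin_right (x θ : ℝ) : Continuous (Jin x θ) := by
  unfold Jin; fun_prop

lemma binner_eq (x θ : ℝ) : binner x θ =
    (Real.cos θ * Real.exp (x * Real.cos θ)) * SS x
    - (Real.exp (x * Real.cos θ)) * TT x
    - (Real.sin θ ^ 2 * Real.cos θ * Real.exp (x * Real.cos θ)) * DD x
    + (Real.sin θ ^ 2 * Real.exp (x * Real.cos θ)) * NN x := by
  have hrw : (fun φ => Jin x θ φ) = fun φ =>
      (Real.cos θ * Real.exp (x * Real.cos θ)) * (Real.sin φ ^ 2 * Real.exp (x * Real.cos φ))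
      - (Real.exp (x * Real.cos θ)) * (Real.sin φ ^ 2 * Real.cos φ * Real.exp (x * Real.cos φ))
      - (Real.sin θ ^ 2 * Real.cos θ * Real.exp (x * Real.cos θ)) * (Real.exp (x * Real.cos φ))
      + (Real.sin θ ^ 2 * Real.exp (x * Real.cos θ)) * (Real.cos φ * Real.exp (x * Real.cos φ)) :=
    funext fun φ => by unfold Jin; ring
  unfold binner
  rw [hrw]
  rw [intervalIntegral.integral_add (Continuous.intervalIntegrable (by fun_prop) _ _)
      (Continuous.intervalIntegrable (by fun_prop) _ _),
    intervalIntegral.integral_sub (Continuous.intervalIntegrable (by fun_prop) _ _)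
      (Continuous.intervalIntegrable (by fun_prop) _ _),
    intervalIntegral.integral_sub (Continuous.intervalIntegrable (by fun_prop) _ _)
      (Continuous.intervalIntegrable (by fun_prop) _ _),
    intervalIntegral.integral_const_mul, intervalIntegral.integral_const_mul,
    intervalIntegral.integral_const_mul, intervalIntegral.integral_const_mul]
  rfl

lemma BB_eq (x : ℝ) : BB x = 2 * (SS x * NN x - TT x * DD x) := by
  unfold BB
  rw [show (fun θ => binner x θ) = fun θ =>
      (Real.cos θ * Real.exp (x * Real.cos θ)) * SS x
      - (Real.exp (x * Real.cos θ)) * TT x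
      - (Real.sin θ ^ 2 * Real.cos θ * Real.exp (x * Real.cos θ)) * DD x
      + (Real.sin θ ^ 2 * Real.exp (x * Real.cos θ)) * NN x from funext fun θ => binner_eq x θ]
  rw [intervalIntegral.integral_add (Continuous.intervalIntegrable (by fun_prop) _ _)
      (Continuous.intervalIntegrable (by fun_prop) _ _),
    intervalIntegral.integral_sub (Continuous.intervalIntegrable (by fun_prop) _ _)
      (Continuous.intervalIntegrable (by fun_prop) _ _),
    intervalIntegral.integral_sub (Continuous.intervalIntegrable (by fun_prop) _ _)
      (Continuous.intervalIntegrable (by fun_prop) _ _),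
    intervalIntegral.integral_mul_const, intervalIntegral.integral_mul_const,
    intervalIntegral.integral_mul_const, intervalIntegral.integral_mul_const]
  show NN x * SS x - DD x * TT x - TT x * DD x + SS x * NN x = _
  ring

lemma BB_odd (x : ℝ) : BB (-x) = -BB x := by
  have step1 : ∀ θ, binner (-x) θ = ∫ φ in (0:ℝ)..(2*π), Jin (-x) θ (φ + π) := by
    intro θ
    exact cosflip (f := Jin (-x) θ) (fun φ => by
      unfold Jin; simp [Real.cos_add_two_pi, Real.sin_add_two_pi])
  set b2 : ℝ → ℝ := fun θ => ∫ φ in (0:ℝ)..(2*π), Jin (-x) θ (φ + π) with hb2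
  have step2 : BB (-x) = ∫ θ in (0:ℝ)..(2*π), b2 θ := by
    unfold BB
    exact intervalIntegral.integral_congr fun θ _ => step1 θ
  have hper : Function.Periodic b2 (2*π) := by
    intro θ
    simp only [hb2]
    apply intervalIntegral.integral_congr
    intro φ _
    unfold Jin
    simp [Real.cos_add_two_pi, Real.sin_add_two_pi]
  have step3 : (∫ θ in (0:ℝ)..(2*π), b2 θ) = ∫ θ in (0:ℝ)..(2*π), b2 (θ + π) := cosflip hper
  have step4 : ∀ θ, b2 (θ + π) = -binner x θ := by
    intro θ
    simp only [hb2]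
    have : (fun φ => Jin (-x) (θ + π) (φ + π)) = fun φ => -(Jin x θ φ) := by
      funext φ
      unfold Jin
      simp only [Real.cos_add_pi, Real.sin_add_pi]
      ring_nf
    rw [this, intervalIntegral.integral_neg]
    rfl
  rw [step2, step3]
  rw [intervalIntegral.integral_congr (fun θ _ => step4 θ), intervalIntegral.integral_neg]
  rfl

lemma Jdiff_key {x : ℝ} (hx : 0 < x) (θ φ : ℝ) :
    0 ≤ Jin x θ φ - Jin (-x) θ φ ∧
      (0 < Real.cos θ → Real.cos θ < Real.cos φ → 0 < Jin x θ φ - Jin (-x) θ φ) := by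
  unfold Jin
  rw [Real.sin_sq, Real.sin_sq]
  set u := Real.cos θ with hu
  set v := Real.cos φ with hv
  have h1 : Real.exp (x*u) * Real.exp (x*v) = Real.exp (x*(u+v)) := by
    rw [← Real.exp_add]; ring_nf
  have h2 : Real.exp (-x*u) * Real.exp (-x*v) = Real.exp (-(x*(u+v))) := by
    rw [← Real.exp_add]; ring_nf
  rw [h1, h2]
  constructor
  · rcases le_or_gt 0 (u + v) with h | h
    · have hE : Real.exp (-(x*(u+v))) ≤ Real.exp (x*(u+v)) := Real.exp_le_exp.2 (by nlinarith)
      nlinarith [mul_nonneg (mul_nonneg (sq_nonneg (u - v)) h) (sub_nonneg.2 hE)]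
    · have hE : Real.exp (x*(u+v)) ≤ Real.exp (-(x*(u+v))) := Real.exp_le_exp.2 (by nlinarith)
      nlinarith [mul_nonneg (sq_nonneg (u - v)) (mul_nonneg_of_nonpos_of_nonpos h.le (sub_nonpos.2 hE))]
  · intro h0 huv
    have hsum : 0 < u + v := by linarith
    have hE : Real.exp (-(x*(u+v))) < Real.exp (x*(u+v)) := Real.exp_lt_exp.2 (by nlinarith)
    have hsq : 0 < (u - v)^2 := by nlinarith
    nlinarith [mul_pos (mul_pos hsq hsum) (sub_pos.2 hE)]

lemma BB_pos {x : ℝ} (hx : 0 < x) : 0 < BB x := by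
  have pi6 : (0:ℝ) < π / 6 := by have := pi_pos; linarith
  have sqrt3 : (1:ℝ) < Real.sqrt 3 := by
    rw [show (1:ℝ) = Real.sqrt 1 from (Real.sqrt_one).symm]
    exact Real.sqrt_lt_sqrt (by norm_num) (by norm_num)
  have gdef : ∀ θ, binner x θ - binner (-x) θ
      = ∫ φ in (0:ℝ)..(2*π), (Jin x θ φ - Jin (-x) θ φ) := by
    intro θ
    rw [intervalIntegral.integral_sub ((continuous_Jin_right x θ).intervalIntegrable _ _)
      ((continuous_Jin_right (-x) θ).intervalIntegrable _ _)]
    rfl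
  have gnonneg : ∀ θ, 0 ≤ binner x θ - binner (-x) θ := by
    intro θ
    rw [gdef θ]
    exact intervalIntegral.integral_nonneg twopi_pos.le fun φ _ => (Jdiff_key hx θ φ).1
  have gpos : ∀ θ ∈ Ioo (π/3) (π/2), 0 < binner x θ - binner (-x) θ := by
    intro θ hθ
    have hθc1 : 0 < Real.cos θ := Real.cos_pos_of_mem_Ioo
      ⟨by have := pi_pos; linarith [hθ.1], hθ.2⟩
    have hθc2 : Real.cos θ < 1/2 := by
      have := Real.cos_lt_cos_of_nonneg_of_le_pi (by positivity) (by have := pi_pos; linarith [hθ.2]) hθ.1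
      rwa [Real.cos_pi_div_three] at this
    rw [gdef θ]
    apply integral_pos_split (u := 0) (v := π/6) le_rfl pi6 (by have := pi_pos; linarith)
      (((continuous_Jin_right x θ).sub (continuous_Jin_right (-x) θ)).intervalIntegrable _ _)
      (fun t _ => (Jdiff_key hx θ t).1)
    intro t ht
    have htc : Real.cos θ < Real.cos t := by
      have h1 : Real.cos (π/6) < Real.cos t := by
        apply Real.cos_lt_cos_of_nonneg_of_le_pi ht.1.le (by have := pi_pos; linarith) ht.2
      rw [Real.cos_pi_div_six] at h1
      have : (1:ℝ)/2 < Real.sqrt 3 / 2 := by linarith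
      linarith
    exact (Jdiff_key hx θ t).2 hθc1 htc
  have key : 0 < BB x - BB (-x) := by
    have hsub : BB x - BB (-x) = ∫ θ in (0:ℝ)..(2*π), (binner x θ - binner (-x) θ) := by
      unfold BB
      rw [intervalIntegral.integral_sub ((continuous_binner x).intervalIntegrable _ _)
        ((continuous_binner (-x)).intervalIntegrable _ _)]
    rw [hsub]
    apply integral_pos_split (u := π/3) (v := π/2)
      (by have := pi_pos; linarith) (by have := pi_pos; linarith) (by have := pi_pos; linarith)
      (((continuous_binner x).sub (continuous_binner (-x))).intervalIntegrable _ _)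
      (fun θ _ => gnonneg θ) gpos
  rw [BB_odd] at key
  linarith

lemma strictAntiOn_W0 : StrictAntiOn W0 (Ioi 0) := by
  apply strictAntiOn_of_deriv_neg (convex_Ioi 0) continuous_W0.continuousOn
  intro x hx
  rw [interior_Ioi] at hx
  rw [(hasDerivAt_W0 x).deriv]
  have h1 : 0 < BB x := BB_pos hx
  rw [BB_eq] at h1
  have h2 : (0:ℝ) < DD x ^ 2 := by have := DD_pos x; positivity
  apply div_neg_of_neg_of_pos _ h2
  nlinarith

lemma W0_zero : W0 0 = 1 := by
  have hS : SS 0 = π := by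
    unfold SS
    simp only [zero_mul, Real.exp_zero, mul_one]
    rw [integral_sin_sq]
    simp [Real.sin_two_pi]
  have hD : DD 0 = 2 * π := by
    unfold DD
    simp
  rw [W0, hS, hD]
  field_simp

lemma V_eq (x : ℝ) : V x = NN x / DD x := rfl

lemma W_eq_W0' {x : ℝ} (hx : x ≠ 0) : 2 * V x / x = W0 x := by
  rw [V_eq, NN_eq, W0]
  have hD := (DD_pos x).ne'
  field_simp

lemma W0_le_one {x : ℝ} (hx : 0 < x) : W0 x ≤ 1 := by
  have tend : Tendsto W0 (nhdsWithin 0 (Ioi 0)) (nhds 1) := by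
    rw [← W0_zero]
    exact (continuous_W0.tendsto 0).mono_left nhdsWithin_le_nhds
  apply ge_of_tendsto tend
  filter_upwards [Ioo_mem_nhdsGT hx] with y hy
  exact (strictAntiOn_W0 hy.1 hx hy.2).le

lemma W0_lt_one {x : ℝ} (hx : 0 < x) : W0 x < 1 :=
  lt_of_lt_of_le (strictAntiOn_W0 (half_pos hx) hx (half_lt_self hx)) (W0_le_one (half_pos hx))

lemma W0_pos {x : ℝ} (hx : 0 < x) : 0 < W0 x := by
  rw [W0]
  exact div_pos (by linarith [SS_pos x]) (DD_pos x)

lemma NN_le_DD (x : ℝ) : NN x ≤ DD x := by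
  apply intervalIntegral.integral_mono_on twopi_pos.le
    (Continuous.intervalIntegrable (by fun_prop) _ _)
    (Continuous.intervalIntegrable (by fun_prop) _ _)
  intro t _
  have h1 : Real.cos t ≤ 1 := Real.cos_le_one t
  have h2 : (0:ℝ) < Real.exp (x * Real.cos t) := Real.exp_pos _
  nlinarith

lemma W_eq {x : ℝ} (hx : x ≠ 0) : W x = W0 x := W_eq_W0' hx

lemma W0_le_two_div {x : ℝ} (hx : 0 < x) : W0 x ≤ 2 / x := by
  rw [W0, div_le_div_iff₀ (DD_pos x) hx]
  have h := NN_le_DD x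
  rw [NN_eq] at h
  nlinarith

lemma W_neg {x : ℝ} (hx : x ≠ 0) : W (-x) = W x := by
  unfold W
  rw [V_eq, V_eq, NN_odd, DD_even]
  have hD := (DD_pos x).ne'
  field_simp

theorem W_properties :
    Tendsto W (nhdsWithin 0 {(0:ℝ)}ᶜ) (nhds 1) ∧
      Tendsto W atTop (nhds 0) ∧
      ContinuousOn W (Ioi (0:ℝ)) ∧
      StrictAntiOn W (Ioi (0:ℝ)) ∧
      (∀ x : ℝ, x ≠ 0 → W (-x) = W x) ∧
      (∀ x : ℝ, x ≠ 0 → 0 < W x ∧ W x < 1) := by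
  refine ⟨?_, ?_, ?_, ?_, fun x hx => W_neg hx, ?_⟩
  · apply tendsto_nhdsWithin_congr (fun x hx => (W_eq (show x ≠ 0 from hx)).symm)
    rw [← W0_zero]
    exact (continuous_W0.tendsto 0).mono_left nhdsWithin_le_nhds
  · apply tendsto_of_tendsto_of_tendsto_of_le_of_le' (g := fun _ : ℝ => (0:ℝ))
      (h := fun x : ℝ => 2 / x) tendsto_const_nhds
      (tendsto_const_nhds.div_atTop tendsto_id)
    · filter_upwards [eventually_gt_atTop (0:ℝ)] with x hx
      rw [W_eq hx.ne']
      exact (W0_pos hx).le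
    · filter_upwards [eventually_gt_atTop (0:ℝ)] with x hx
      rw [W_eq hx.ne']
      exact W0_le_two_div hx
  · exact continuous_W0.continuousOn.congr fun x hx => W_eq (ne_of_gt hx)
  · intro a ha b hb hab
    rw [W_eq (ne_of_gt ha), W_eq (ne_of_gt hb)]
    exact strictAntiOn_W0 ha hb hab
  · intro x hx
    rcases hx.lt_or_gt with h | h
    · have hx' : (0:ℝ) < -x := by linarith
      have := W_neg (show -x ≠ 0 by linarith)
      rw [neg_neg] at this
      rw [this, W_eq hx'.ne']
      exact ⟨W0_pos hx', W0_lt_one hx'⟩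
    · rw [W_eq h.ne']
      exact ⟨W0_pos h, W0_lt_one h⟩
end

section
/- Let K₁ ∈ ℝ and L₁ ∈ ℝ \ {0}. Then h₁(r₁, r₂) < 0 for all (r₁, r₂) ∈ [0,1]² \ {(0,0)} if and only if K₁ ≤ 2 and L₁ < 0. -/
open Real Set

namespace VAux

open intervalIntegral MeasureTheory

/-- `A x = ∫ sin²θ e^{x cos θ}`. -/
noncomputable def A (x : ℝ) : ℝ := ∫ θ in (0:ℝ)..(2 * π), Real.sin θ ^ 2 * Real.exp (x * Real.cos θ)

/-- `B x = ∫ e^{x cos θ}`. -/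
noncomputable def B (x : ℝ) : ℝ := ∫ θ in (0:ℝ)..(2 * π), Real.exp (x * Real.cos θ)

/-- `I x = ∫ sin²θ cos θ e^{x cos θ}`. -/
noncomputable def I (x : ℝ) : ℝ :=
  ∫ θ in (0:ℝ)..(2 * π), Real.sin θ ^ 2 * Real.cos θ * Real.exp (x * Real.cos θ)

lemma twopi_pos : (0:ℝ) < 2 * π := by positivity

lemma intB (x a b : ℝ) : IntervalIntegrable (fun θ => Real.exp (x * Real.cos θ)) volume a b := by
  apply Continuous.intervalIntegrable; fun_prop

lemma intA (x a b : ℝ) :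
    IntervalIntegrable (fun θ => Real.sin θ ^ 2 * Real.exp (x * Real.cos θ)) volume a b := by
  apply Continuous.intervalIntegrable; fun_prop

lemma intI (x a b : ℝ) :
    IntervalIntegrable (fun θ => Real.sin θ ^ 2 * Real.cos θ * Real.exp (x * Real.cos θ))
      volume a b := by
  apply Continuous.intervalIntegrable; fun_prop

lemma intN (x a b : ℝ) :
    IntervalIntegrable (fun θ => Real.cos θ * Real.exp (x * Real.cos θ)) volume a b := by
  apply Continuous.intervalIntegrable; fun_prop

lemma B_pos (x : ℝ) : 0 < B x :=
  intervalIntegral_pos_of_pos (intB x 0 (2*π)) (fun θ => Real.exp_pos _) twopi_pos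

lemma A_ge_pi (x : ℝ) : π ≤ A x := by
  have h : ∫ θ in (0:ℝ)..(2*π), (Real.sin θ ^ 2 + x * (Real.sin θ ^ 2 * Real.cos θ)) = π := by
    rw [intervalIntegral.integral_add (by apply Continuous.intervalIntegrable; fun_prop)
      (by apply Continuous.intervalIntegrable; fun_prop), intervalIntegral.integral_const_mul]
    rw [integral_sin_sq, integral_sin_sq_mul_cos]
    simp [Real.sin_two_pi, Real.cos_two_pi]
  rw [← h]
  apply intervalIntegral.integral_mono_on twopi_pos.le
    (by apply Continuous.intervalIntegrable; fun_prop) (intA x 0 (2*π))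
  intro θ _
  nlinarith [Real.add_one_le_exp (x * Real.cos θ), sq_nonneg (Real.sin θ),
    mul_nonneg (sq_nonneg (Real.sin θ))
      (sub_nonneg.mpr ((Real.add_one_le_exp (x * Real.cos θ)).trans_eq rfl))]

lemma A_pos (x : ℝ) : 0 < A x := lt_of_lt_of_le Real.pi_pos (A_ge_pi x)

lemma hasDeriv1 (x θ : ℝ) : HasDerivAt (fun θ => Real.sin θ * Real.exp (x * Real.cos θ))
    (Real.cos θ * Real.exp (x * Real.cos θ) - x * (Real.sin θ ^ 2 * Real.exp (x * Real.cos θ))) θ := by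
  have h1 : HasDerivAt (fun θ => x * Real.cos θ) (x * (-Real.sin θ)) θ :=
    (Real.hasDerivAt_cos θ).const_mul x
  have h2 := (Real.hasDerivAt_exp (x * Real.cos θ)).comp θ h1
  have h3 := (Real.hasDerivAt_sin θ).mul h2
  refine h3.congr_deriv ?_
  simp only [Function.comp, Pi.mul_apply]
  ring

lemma num_eq (x : ℝ) :
    (∫ θ in (0:ℝ)..(2*π), Real.cos θ * Real.exp (x * Real.cos θ)) = x * A x := by
  have key : ∫ θ in (0:ℝ)..(2*π),
      (Real.cos θ * Real.exp (x * Real.cos θ) - x * (Real.sin θ ^ 2 * Real.exp (x * Real.cos θ)))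
      = 0 := by
    rw [intervalIntegral.integral_eq_sub_of_hasDerivAt (fun θ _ => hasDeriv1 x θ)
      (by apply Continuous.intervalIntegrable; fun_prop)]
    simp [Real.sin_two_pi]
  rw [intervalIntegral.integral_sub (intN x 0 (2*π))
    (by apply Continuous.intervalIntegrable; fun_prop), intervalIntegral.integral_const_mul] at key
  unfold A
  linarith

lemma V_eq (x : ℝ) : V x = x * A x / B x := by
  unfold V B
  rw [num_eq]

lemma hasDeriv2 (x θ : ℝ) : HasDerivAt (fun θ => Real.sin θ * Real.cos θ * Real.exp (x * Real.cos θ))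
    ((1 - 2 * Real.sin θ ^ 2) * Real.exp (x * Real.cos θ)
      - x * (Real.sin θ ^ 2 * Real.cos θ * Real.exp (x * Real.cos θ))) θ := by
  have h1 : HasDerivAt (fun θ => x * Real.cos θ) (x * (-Real.sin θ)) θ :=
    (Real.hasDerivAt_cos θ).const_mul x
  have h2 := (Real.hasDerivAt_exp (x * Real.cos θ)).comp θ h1
  have h3 := ((Real.hasDerivAt_sin θ).mul (Real.hasDerivAt_cos θ)).mul h2
  refine h3.congr_deriv ?_
  simp only [Function.comp, Pi.mul_apply]
  have h := Real.sin_sq_add_cos_sq θ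
  linear_combination (Real.exp (x * Real.cos θ)) * h

lemma BA_eq (x : ℝ) : B x - 2 * A x = x * I x := by
  have key : ∫ θ in (0:ℝ)..(2*π),
      ((1 - 2 * Real.sin θ ^ 2) * Real.exp (x * Real.cos θ)
        - x * (Real.sin θ ^ 2 * Real.cos θ * Real.exp (x * Real.cos θ))) = 0 := by
    rw [intervalIntegral.integral_eq_sub_of_hasDerivAt (fun θ _ => hasDeriv2 x θ)
      (by apply Continuous.intervalIntegrable; fun_prop)]
    simp [Real.sin_two_pi]
  have expand : ∀ θ : ℝ, (1 - 2 * Real.sin θ ^ 2) * Real.exp (x * Real.cos θ)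
      = Real.exp (x * Real.cos θ) - 2 * (Real.sin θ ^ 2 * Real.exp (x * Real.cos θ)) := by
    intro θ; ring
  rw [intervalIntegral.integral_sub (by apply Continuous.intervalIntegrable; fun_prop)
    (by apply Continuous.intervalIntegrable; fun_prop)] at key
  simp only [expand] at key
  rw [intervalIntegral.integral_sub (intB x 0 (2*π))
    (by apply Continuous.intervalIntegrable; fun_prop),
    intervalIntegral.integral_const_mul, intervalIntegral.integral_const_mul] at key
  unfold A B I
  linarith

lemma I_symm (x : ℝ) : 2 * I x = ∫ θ in (0:ℝ)..(2*π),
    Real.sin θ ^ 2 * Real.cos θ * (Real.exp (x * Real.cos θ) - Real.exp (-(x * Real.cos θ))) := by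
  have hper : Function.Periodic
      (fun θ => Real.sin θ ^ 2 * Real.cos θ * Real.exp (x * Real.cos θ)) (2*π) := by
    intro t; simp [Real.sin_add_two_pi, Real.cos_add_two_pi]
  have h1 : I x = ∫ θ in π..(π + 2*π),
      Real.sin θ ^ 2 * Real.cos θ * Real.exp (x * Real.cos θ) := by
    unfold I
    have := hper.intervalIntegral_add_eq π 0
    rw [this]; norm_num
  have h2 : (∫ θ in π..(π + 2*π), Real.sin θ ^ 2 * Real.cos θ * Real.exp (x * Real.cos θ))
      = ∫ θ in (0:ℝ)..(2*π),
        Real.sin (θ + π) ^ 2 * Real.cos (θ + π) * Real.exp (x * Real.cos (θ + π)) := by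
    rw [intervalIntegral.integral_comp_add_right
      (fun θ => Real.sin θ ^ 2 * Real.cos θ * Real.exp (x * Real.cos θ)) π]
    congr 1 <;> ring
  have h3 : (∫ θ in (0:ℝ)..(2*π),
      Real.sin (θ + π) ^ 2 * Real.cos (θ + π) * Real.exp (x * Real.cos (θ + π)))
      = ∫ θ in (0:ℝ)..(2*π), -(Real.sin θ ^ 2 * Real.cos θ * Real.exp (-(x * Real.cos θ))) := by
    apply intervalIntegral.integral_congr
    intro θ _
    simp [Real.sin_add_pi, Real.cos_add_pi]
  have h4 : I x = ∫ θ in (0:ℝ)..(2*π),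
      -(Real.sin θ ^ 2 * Real.cos θ * Real.exp (-(x * Real.cos θ))) := by
    rw [h1, h2, h3]
  have expand : ∀ θ : ℝ,
      Real.sin θ ^ 2 * Real.cos θ * (Real.exp (x * Real.cos θ) - Real.exp (-(x * Real.cos θ)))
      = Real.sin θ ^ 2 * Real.cos θ * Real.exp (x * Real.cos θ)
        + -(Real.sin θ ^ 2 * Real.cos θ * Real.exp (-(x * Real.cos θ))) := by
    intro θ; ring
  simp only [expand]
  rw [intervalIntegral.integral_add (intI x 0 (2*π))
    (by apply Continuous.intervalIntegrable; fun_prop)]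
  rw [← h4]
  unfold I
  ring

lemma symm_nonneg (x : ℝ) (hx : 0 < x) (θ : ℝ) :
    0 ≤ Real.sin θ ^ 2 * Real.cos θ * (Real.exp (x * Real.cos θ) - Real.exp (-(x * Real.cos θ))) := by
  rcases le_or_gt 0 (Real.cos θ) with h | h
  · apply mul_nonneg (mul_nonneg (sq_nonneg _) h)
    have hle : -(x * Real.cos θ) ≤ x * Real.cos θ := by nlinarith
    linarith [Real.exp_le_exp.mpr hle]
  · have h1 : Real.sin θ ^ 2 * Real.cos θ ≤ 0 := mul_nonpos_of_nonneg_of_nonpos (sq_nonneg _) h.le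
    have hle : x * Real.cos θ ≤ -(x * Real.cos θ) := by nlinarith
    have h2 : Real.exp (x * Real.cos θ) - Real.exp (-(x * Real.cos θ)) ≤ 0 := by
      linarith [Real.exp_le_exp.mpr hle]
    nlinarith [mul_nonneg (neg_nonneg.2 h1) (neg_nonneg.2 h2)]

lemma I_pos (x : ℝ) (hx : 0 < x) : 0 < I x := by
  set f : ℝ → ℝ := fun θ =>
    Real.sin θ ^ 2 * Real.cos θ * (Real.exp (x * Real.cos θ) - Real.exp (-(x * Real.cos θ)))
    with hf
  have hint : ∀ a b : ℝ, IntervalIntegrable f volume a b := by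
    intro a b; apply Continuous.intervalIntegrable; fun_prop
  have hnn := symm_nonneg x hx
  have hsplit : (∫ θ in (0:ℝ)..(2*π), f θ)
      = (∫ θ in (0:ℝ)..(π/6), f θ) + ((∫ θ in (π/6:ℝ)..(π/3), f θ)
        + ∫ θ in (π/3:ℝ)..(2*π), f θ) := by
    rw [intervalIntegral.integral_add_adjacent_intervals (hint _ _) (hint _ _),
      intervalIntegral.integral_add_adjacent_intervals (hint _ _) (hint _ _)]
  have hpi := Real.pi_pos
  have h1 : 0 ≤ ∫ θ in (0:ℝ)..(π/6), f θ :=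
    intervalIntegral.integral_nonneg (by linarith) (fun θ _ => hnn θ)
  have h3 : 0 ≤ ∫ θ in (π/3:ℝ)..(2*π), f θ :=
    intervalIntegral.integral_nonneg (by linarith) (fun θ _ => hnn θ)
  have h2 : 0 < ∫ θ in (π/6:ℝ)..(π/3), f θ := by
    apply intervalIntegral.intervalIntegral_pos_of_pos_on (hint _ _) _ (by linarith)
    intro θ hθ
    obtain ⟨hθ1, hθ2⟩ := hθ
    have hs : 0 < Real.sin θ := Real.sin_pos_of_pos_of_lt_pi (by linarith) (by linarith)
    have hc : 0 < Real.cos θ := Real.cos_pos_of_mem_Ioo ⟨by linarith, by linarith⟩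
    have hxe : -(x * Real.cos θ) < x * Real.cos θ := by nlinarith
    have := Real.exp_lt_exp.mpr hxe
    rw [hf]
    have : 0 < Real.exp (x * Real.cos θ) - Real.exp (-(x * Real.cos θ)) := by linarith
    positivity
  have : 0 < ∫ θ in (0:ℝ)..(2*π), f θ := by rw [hsplit]; linarith
  have hsym := I_symm x
  linarith [hsym ▸ this]

lemma V_lt_half (x : ℝ) (hx : 0 < x) : V x < x / 2 := by
  rw [V_eq]
  have hB := B_pos x
  have hA := A_pos x
  have hI := I_pos x hx
  have hBA := BA_eq x
  rw [div_lt_div_iff₀ hB (by norm_num : (0:ℝ) < 2)]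
  nlinarith [mul_pos (mul_pos hx hx) hI]

lemma V_nonpos (x : ℝ) (hx : x ≤ 0) : V x ≤ 0 := by
  rw [V_eq]
  exact div_nonpos_of_nonpos_of_nonneg (mul_nonpos_of_nonpos_of_nonneg hx (A_pos x).le) (B_pos x).le

lemma V_neg (x : ℝ) (hx : x < 0) : V x < 0 := by
  rw [V_eq]
  exact div_neg_of_neg_of_pos (mul_neg_of_neg_of_pos hx (A_pos x)) (B_pos x)

lemma V_pos (x : ℝ) (hx : 0 < x) : 0 < V x := by
  rw [V_eq]
  exact div_pos (mul_pos hx (A_pos x)) (B_pos x)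

lemma B_le (x : ℝ) (hx : 0 ≤ x) : B x ≤ 2 * π * Real.exp x := by
  have : (2 * π * Real.exp x) = ∫ _ in (0:ℝ)..(2*π), Real.exp x := by
    simp [mul_comm]
  rw [this]
  apply intervalIntegral.integral_mono_on twopi_pos.le (intB x 0 (2*π))
    (by apply Continuous.intervalIntegrable; fun_prop)
  intro θ _
  exact Real.exp_le_exp.mpr (by nlinarith [Real.cos_le_one θ])

lemma V_lb (x : ℝ) (hx : 0 < x) : x / (2 * Real.exp x) ≤ V x := by
  rw [V_eq]
  have hB := B_pos x
  have he : (0:ℝ) < 2 * Real.exp x := by positivity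
  rw [div_le_div_iff₀ he hB]
  have hA := A_ge_pi x
  have hBle := B_le x hx.le
  nlinarith [Real.pi_pos, mul_le_mul_of_nonneg_left hBle hx.le,
    mul_le_mul_of_nonneg_left hA
      (mul_nonneg (mul_nonneg (by norm_num : (0:ℝ) ≤ 2) hx.le) (Real.exp_pos x).le)]

end VAux

theorem h1_neg_iff (K₁ L₁ : ℝ) (hL₁ : L₁ ≠ 0) :
    (∀ r₁ r₂ : ℝ, r₁ ∈ Icc (0:ℝ) 1 → r₂ ∈ Icc (0:ℝ) 1 → (r₁, r₂) ≠ (0, 0) →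
        V (K₁ * r₁ + L₁ * r₂) - r₁ < 0) ↔ K₁ ≤ 2 ∧ L₁ < 0 := by
  constructor
  · intro H
    have hL : L₁ < 0 := by
      rcases lt_or_gt_of_ne hL₁ with h | h
      · exact h
      · exfalso
        have := H 0 1 ⟨le_refl 0, zero_le_one⟩ ⟨zero_le_one, le_refl 1⟩ (by simp)
        simp at this
        exact absurd this (not_lt.mpr (VAux.V_pos L₁ h).le)
    refine ⟨?_, hL⟩
    by_contra hK
    push_neg at hK
    have hK0 : (0:ℝ) < K₁ := by linarith
    have hlog : 0 < Real.log (K₁ / 2) := Real.log_pos (by linarith)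
    set r := min 1 (Real.log (K₁ / 2) / K₁) with hr
    have hrpos : 0 < r := lt_min one_pos (div_pos hlog hK0)
    have hrle : r ≤ 1 := min_le_left _ _
    have h := H r 0 ⟨hrpos.le, hrle⟩ ⟨le_refl 0, zero_le_one⟩ (by simp [hrpos.ne'])
    simp only [mul_zero, add_zero] at h
    have hxpos : 0 < K₁ * r := mul_pos hK0 hrpos
    have hlb := VAux.V_lb (K₁ * r) hxpos
    have hexp : Real.exp (K₁ * r) ≤ K₁ / 2 := by
      rw [← Real.exp_log (show (0:ℝ) < K₁ / 2 by linarith)]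
      apply Real.exp_le_exp.mpr
      have hmin : r ≤ Real.log (K₁ / 2) / K₁ := min_le_right _ _
      calc K₁ * r ≤ K₁ * (Real.log (K₁ / 2) / K₁) := by nlinarith
        _ = Real.log (K₁ / 2) := by field_simp
    have hge : r ≤ K₁ * r / (2 * Real.exp (K₁ * r)) := by
      rw [le_div_iff₀ (by positivity)]
      nlinarith [mul_le_mul_of_nonneg_left hexp hrpos.le]
    linarith
  · rintro ⟨hK, hL⟩ r₁ r₂ ⟨h10, h11⟩ ⟨h20, h21⟩ hne
    set x := K₁ * r₁ + L₁ * r₂ with hx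
    rcases le_or_gt x 0 with hx0 | hx0
    · rcases eq_or_lt_of_le h10 with h | h
      · have hr2 : r₂ ≠ 0 := by
          intro h2
          exact hne (by simp [← h, h2])
        have hr2' : 0 < r₂ := lt_of_le_of_ne h20 (Ne.symm hr2)
        have : x < 0 := by
          rw [hx, ← h]
          simp
          exact mul_neg_of_neg_of_pos hL hr2'
        have := VAux.V_neg x this
        linarith
      · linarith [VAux.V_nonpos x hx0]
    · have hr1 : 0 < r₁ := by
        rcases eq_or_lt_of_le h10 with h | h
        · exfalso
          have : x = L₁ * r₂ := by rw [hx, ← h]; ring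
          have : x ≤ 0 := this ▸ mul_nonpos_of_nonpos_of_nonneg hL.le h20
          linarith
        · exact h
      have hxle : x ≤ 2 * r₁ := by
        have h1 : K₁ * r₁ ≤ 2 * r₁ := mul_le_mul_of_nonneg_right hK h10
        have h2 : L₁ * r₂ ≤ 0 := mul_nonpos_of_nonpos_of_nonneg hL.le h20
        linarith
      have := VAux.V_lt_half x hx0
      linarith
end
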